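/- Let A ∈ 𝔰𝔭(ℝ⁶) with A ≠ 0, and set d := ( |[A,Aᵗ]|² + ⟨S_A ∘₆ S_A, [A,Aᵗ]⟩ ) / (2|A|²). The following are equivalent: (1) there exist c ∈ ℝ and a derivation D of 𝔤_A such that Q_A = c·I₇ + ½(D + Dᵗ) (i.e. the associated coclosed G₂-structure is a semi-algebraic soliton of the Laplacian coflow); (2) there exists D₁ ∈ gl(ℝ⁶) with [D₁, A] = d·A and [A,Aᵗ] + S_A ∘₆ S_A = −( tr(S_A²) + ½(tr JA)² + 2d )·I₆ + D₁ + D₁ᵗ. In this case c = −½( tr(S_A²) + ½(tr JA)² + 2d ). -/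

import Mathlib

open Matrix BigOperators

noncomputable section

abbrev M6 : Type := Matrix (Fin 6) (Fin 6) ℝ
abbrev M7 : Type := Matrix (Fin 7) (Fin 7) ℝ

/-- The canonical almost complex structure `J` on `ℝ⁶`:
`Je₁ = e₂, Je₂ = −e₁, Je₃ = e₄, Je₄ = −e₃, Je₅ = e₆, Je₆ = −e₅` (0-based indices). -/
def J6 : M6 := Matrix.of fun i j =>
  if (i = 1 ∧ j = 0) ∨ (i = 3 ∧ j = 2) ∨ (i = 5 ∧ j = 4) then 1
  else if (i = 0 ∧ j = 1) ∨ (i = 2 ∧ j = 3) ∨ (i = 4 ∧ j = 5) then -1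
  else 0

/-- `A ∈ 𝔰𝔭(ℝ⁶)` iff `AJ + JAᵗ = 0`. -/
def inSp (A : M6) : Prop := A * J6 + J6 * Aᵀ = 0

/-- The symmetric part `S_A = ½(A + Aᵗ)`. -/
def symPart (A : M6) : M6 := (1/2 : ℝ) • (A + Aᵀ)

/-- Frobenius inner product `⟨X,Y⟩ = tr(XYᵗ)`. -/
def mdot {n : ℕ} (X Y : Matrix (Fin n) (Fin n) ℝ) : ℝ := (X * Yᵀ).trace

/-- Commutator `[X,Y] = XY − YX`. -/
def mcomm {n : ℕ} (X Y : Matrix (Fin n) (Fin n) ℝ) : Matrix (Fin n) (Fin n) ℝ := X * Y - Y * X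

/-- Kronecker delta. -/
def kdelta {n : ℕ} (x y : Fin n) : ℝ := if x = y then 1 else 0

/-- The totally antisymmetric 3-tensor `e^a ∧ e^b ∧ e^c` evaluated on `(e_i, e_j, e_k)`. -/
def alt3 {n : ℕ} (a b c i j k : Fin n) : ℝ :=
  Matrix.det !![kdelta a i, kdelta a j, kdelta a k;
                kdelta b i, kdelta b j, kdelta b k;
                kdelta c i, kdelta c j, kdelta c k]

/-- `ρ⁺ = e¹³⁵ − e¹⁴⁶ − e²⁴⁵ − e²³⁶` (here written with 0-based indices). -/
def rhoP (i j k : Fin 6) : ℝ :=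
  alt3 0 2 4 i j k - alt3 0 3 5 i j k - alt3 1 3 4 i j k - alt3 1 2 5 i j k

/-- `(h ∘₆ k)_{ab} = Σ_{m,n,p,q} h_{mn} k_{pq} ρ⁺_{mpa} ρ⁺_{nqb}`. -/
def circ6 (h k : M6) : M6 :=
  Matrix.of fun a b => ∑ m, ∑ n, ∑ p, ∑ q, h m n * k p q * rhoP m p a * rhoP n q b

/-- Embed a 6×6 block and a scalar as a block-diagonal 7×7 matrix `diag(M, x)`. -/
def blockDiag7 (M : M6) (x : ℝ) : M7 :=
  Matrix.of fun i j =>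
    if hi : (i : ℕ) < 6 then
      (if hj : (j : ℕ) < 6 then M ⟨i, hi⟩ ⟨j, hj⟩ else 0)
    else (if (j : ℕ) < 6 then 0 else x)

/-- The Lie bracket of the almost Abelian Lie algebra `𝔤_A = ℝ⁶ ⊕ ℝe₇`:
`[e₇, v] = Av` for `v ∈ ℝ⁶` and `[v, w] = 0` for `v, w ∈ ℝ⁶`. -/
def bracket7 (A : M6) (x y : Fin 7 → ℝ) : Fin 7 → ℝ :=
  x 6 • (blockDiag7 A 0).mulVec y - y 6 • (blockDiag7 A 0).mulVec x

/-- `D ∈ gl(ℝ⁷)` is a derivation of `𝔤_A`. -/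
def IsDerivation7 (A : M6) (D : M7) : Prop :=
  ∀ x y : Fin 7 → ℝ,
    D.mulVec (bracket7 A x y) = bracket7 A (D.mulVec x) y + bracket7 A x (D.mulVec y)

/-- `Q_A = diag(½[A,Aᵗ] + ½ S_A ∘₆ S_A , −½tr(S_A²) − ¼(tr JA)²)`, the matrix with
`Δ_A ψ = θ(Q_A)ψ`. -/
def QA (A : M6) : M7 :=
  blockDiag7 ((1/2 : ℝ) • mcomm A Aᵀ + (1/2 : ℝ) • circ6 (symPart A) (symPart A))
    (-(1/2) * (symPart A * symPart A).trace - (1/4) * ((J6 * A).trace)^2)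


section Helpers

lemma six_eq_last : (6 : Fin 7) = Fin.last 6 := rfl

lemma cs_ne_six (k : Fin 6) : k.castSucc ≠ (6 : Fin 7) := by
  simp [Fin.ext_iff]; omega

lemma cs_ne_last (k : Fin 6) : k.castSucc ≠ Fin.last 6 := (Fin.castSucc_lt_last k).ne
lemma last_ne_cs (k : Fin 6) : Fin.last 6 ≠ k.castSucc := (Fin.castSucc_lt_last k).ne'

lemma bd_ll (M : M6) (x : ℝ) (i j : Fin 6) : blockDiag7 M x i.castSucc j.castSucc = M i j := by
  simp [blockDiag7, i.is_lt, j.is_lt]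

lemma bd_lr (M : M6) (x : ℝ) (i : Fin 6) : blockDiag7 M x i.castSucc (Fin.last 6) = 0 := by
  simp [blockDiag7, i.is_lt]

lemma bd_rl (M : M6) (x : ℝ) (j : Fin 6) : blockDiag7 M x (Fin.last 6) j.castSucc = 0 := by
  simp [blockDiag7]

lemma bd_rr (M : M6) (x : ℝ) : blockDiag7 M x (Fin.last 6) (Fin.last 6) = x := by
  simp [blockDiag7]

lemma bd_rr6 (M : M6) (x : ℝ) : blockDiag7 M x 6 6 = x := bd_rr M x

lemma bd_mul (M N : M6) (x y : ℝ) :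
    blockDiag7 M x * blockDiag7 N y = blockDiag7 (M * N) (x * y) := by
  ext i j
  rw [Matrix.mul_apply]
  induction i using Fin.lastCases with
  | last =>
    induction j using Fin.lastCases with
    | last => simp [-Fin.reduceLast, Fin.sum_univ_castSucc, bd_rl, bd_lr, bd_rr]
    | cast j => simp [-Fin.reduceLast, Fin.sum_univ_castSucc, bd_rl, bd_lr, bd_rr, bd_ll]
  | cast i =>
    induction j using Fin.lastCases with
    | last => simp [-Fin.reduceLast, Fin.sum_univ_castSucc, bd_rl, bd_lr, bd_rr, bd_ll]
    | cast j => simp [-Fin.reduceLast, Fin.sum_univ_castSucc, bd_rl, bd_lr, bd_rr, bd_ll, Matrix.mul_apply]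

lemma bd_add (M N : M6) (x y : ℝ) :
    blockDiag7 M x + blockDiag7 N y = blockDiag7 (M + N) (x + y) := by
  ext i j
  induction i using Fin.lastCases with
  | last => induction j using Fin.lastCases with
    | last => simp [-Fin.reduceLast, bd_rr]
    | cast j => simp [-Fin.reduceLast, bd_rl]
  | cast i =>
    induction j using Fin.lastCases with
    | last => simp [-Fin.reduceLast, bd_lr]
    | cast j => simp [-Fin.reduceLast, bd_ll]

lemma bd_smul (c : ℝ) (M : M6) (x : ℝ) :
    c • blockDiag7 M x = blockDiag7 (c • M) (c * x) := by
  ext i j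
  induction i using Fin.lastCases with
  | last => induction j using Fin.lastCases with
    | last => simp [-Fin.reduceLast, bd_rr]
    | cast j => simp [-Fin.reduceLast, bd_rl]
  | cast i =>
    induction j using Fin.lastCases with
    | last => simp [-Fin.reduceLast, bd_lr]
    | cast j => simp [-Fin.reduceLast, bd_ll]

lemma bd_transpose (M : M6) (x : ℝ) : (blockDiag7 M x)ᵀ = blockDiag7 Mᵀ x := by
  ext i j
  induction i using Fin.lastCases with
  | last => induction j using Fin.lastCases with
    | last => simp [-Fin.reduceLast, bd_rr]
    | cast j => simp [-Fin.reduceLast, bd_rl, bd_lr]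
  | cast i =>
    induction j using Fin.lastCases with
    | last => simp [-Fin.reduceLast, bd_lr, bd_rl]
    | cast j => simp [-Fin.reduceLast, bd_ll]

lemma bd_one : (1 : M7) = blockDiag7 1 1 := by
  ext i j
  induction i using Fin.lastCases with
  | last => induction j using Fin.lastCases with
    | last => simp [-Fin.reduceLast, bd_rr]
    | cast j => simp [-Fin.reduceLast, bd_rl, Matrix.one_apply, six_eq_last ▸ (cs_ne_six j).symm]
  | cast i =>
    induction j using Fin.lastCases with
    | last => simp [-Fin.reduceLast, bd_lr, Matrix.one_apply, six_eq_last ▸ cs_ne_six i]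
    | cast j => simp [-Fin.reduceLast, bd_ll, Matrix.one_apply, Fin.castSucc_inj]

lemma bd_mulVec_six (M : M6) (c : ℝ) (v : Fin 7 → ℝ) :
    (blockDiag7 M c).mulVec v 6 = c * v 6 := by
  simp [-Fin.reduceLast, Matrix.mulVec, dotProduct, Fin.sum_univ_castSucc, six_eq_last, bd_rl, bd_rr]

lemma bd_congr {M N : M6} {x y : ℝ} (h1 : M = N) (h2 : x = y) :
    blockDiag7 M x = blockDiag7 N y := by rw [h1, h2]

lemma isDeriv_bd (A D₁ : M6) (d : ℝ) (h : D₁ * A - A * D₁ = d • A) :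
    IsDerivation7 A (blockDiag7 D₁ d) := by
  have h' : D₁ * A = d • A + A * D₁ := eq_add_of_sub_eq h
  have hmat : blockDiag7 D₁ d * blockDiag7 A 0 =
      d • blockDiag7 A 0 + blockDiag7 A 0 * blockDiag7 D₁ d := by
    rw [bd_mul, bd_mul, bd_smul, bd_add, h']
    norm_num
  intro x y
  simp only [bracket7]
  simp only [Matrix.mulVec_sub, Matrix.mulVec_smul, Matrix.mulVec_mulVec, hmat,
    Matrix.add_mulVec, Matrix.smul_mulVec, bd_mulVec_six]
  funext k
  simp only [Pi.add_apply, Pi.sub_apply, Pi.smul_apply, smul_eq_mul]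
  ring

lemma deriv_comm (A : M6) (D : M7) (hD : IsDerivation7 A D) (i j : Fin 6) :
    (∑ k : Fin 6, D i.castSucc k.castSucc * A k j)
      - (∑ k : Fin 6, A i k * D k.castSucc j.castSucc) = D 6 6 * A i j := by
  have h := congrFun (hD (Pi.single (6:Fin 7) 1) (Pi.single j.castSucc 1)) i.castSucc
  simp [-Fin.reduceLast, bracket7, Matrix.mulVec, dotProduct, Pi.single_apply,
    Fin.sum_univ_castSucc, bd_ll, bd_lr, bd_rl, bd_rr, six_eq_last,
    Fin.castSucc_inj, mul_ite, ite_mul,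
    Finset.sum_ite_eq, Finset.sum_ite_eq', cs_ne_six, cs_ne_last, last_ne_cs] at h
  simp [-Fin.reduceLast, Fin.sum_univ_castSucc, six_eq_last]
  linarith [h]

lemma trace_AAt_pos (A : M6) (h : A ≠ 0) : 0 < (A * Aᵀ).trace := by
  have h1 : (A * Aᵀ).trace = ∑ i, ∑ j, (A i j)^2 := by
    simp [Matrix.trace, Matrix.mul_apply, Matrix.diag, sq]
  rw [h1]
  obtain ⟨i, j, hij⟩ : ∃ i j, A i j ≠ 0 := by
    by_contra hc
    push_neg at hc
    exact h (by ext i j; simp [hc])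
  have hrow : 0 < ∑ j, (A i j)^2 := by
    apply Finset.sum_pos' (fun k _ => sq_nonneg _)
    exact ⟨j, Finset.mem_univ j, by positivity⟩
  apply Finset.sum_pos' (fun k _ => Finset.sum_nonneg fun l _ => sq_nonneg _)
  exact ⟨i, Finset.mem_univ i, hrow⟩

lemma trace_key (A E P : M6) (μ c : ℝ)
    (hcomm : E * A - A * E = μ • A)
    (heq : (1/2 : ℝ) • (A*Aᵀ - Aᵀ*A) + (1/2 : ℝ) • P = c • (1 : M6) + (1/2 : ℝ) • (E + Eᵀ)) :
    ((A*Aᵀ - Aᵀ*A) * (A*Aᵀ - Aᵀ*A)).trace + (P * (A*Aᵀ - Aᵀ*A)).trace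
      = 2 * μ * (A * Aᵀ).trace := by
  set C : M6 := A*Aᵀ - Aᵀ*A with hCdef
  have hC : Cᵀ = C := by
    simp [hCdef, Matrix.transpose_sub, Matrix.transpose_mul]
  have htrC : C.trace = 0 := by
    simp [hCdef, Matrix.trace_sub, Matrix.trace_mul_comm A Aᵀ]
  have hEA : E * A = μ • A + A * E := eq_add_of_sub_eq hcomm
  have h1 : (E * C).trace = μ * (A*Aᵀ).trace := by
    have expand : E * C = μ • (A * Aᵀ) + (A * E) * Aᵀ - (E * Aᵀ) * A := by
      rw [hCdef, mul_sub, ← mul_assoc, ← mul_assoc, hEA, add_mul, smul_mul_assoc]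
    rw [expand, Matrix.trace_sub, Matrix.trace_add, Matrix.trace_smul,
      Matrix.trace_mul_comm (E * Aᵀ) A, ← mul_assoc]
    simp [smul_eq_mul]
  have h2 : (Eᵀ * C).trace = (E * C).trace := by
    conv_lhs => rw [← Matrix.trace_transpose, Matrix.transpose_mul,
      Matrix.transpose_transpose, hC, Matrix.trace_mul_comm]
  have h3 := congrArg (fun X : M6 => (X * C).trace) heq
  simp only [Matrix.add_mul, Matrix.smul_mul, Matrix.one_mul, Matrix.trace_add,
    Matrix.trace_smul, h1, h2, htrC, smul_eq_mul] at h3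
  linarith [h3]

lemma part2 (A : M6) (d : ℝ)
    (h : ∃ D₁ : M6, mcomm D₁ A = d • A ∧
        mcomm A Aᵀ + circ6 (symPart A) (symPart A) =
          (-((symPart A * symPart A).trace + (1/2) * ((J6 * A).trace)^2 + 2*d)) • (1 : M6)
            + D₁ + D₁ᵀ) :
    ∃ D : M7, IsDerivation7 A D ∧
      QA A = (-(1/2) * ((symPart A * symPart A).trace + (1/2) * ((J6 * A).trace)^2 + 2*d))
          • (1 : M7) + (1/2 : ℝ) • (D + Dᵀ) := by
  obtain ⟨D₁, h1, h2⟩ := h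
  refine ⟨blockDiag7 D₁ d, isDeriv_bd A D₁ d (by simpa [mcomm] using h1), ?_⟩
  rw [bd_transpose, bd_add, bd_smul, bd_one, bd_smul, bd_add]
  unfold QA
  refine bd_congr ?_ (by ring)
  ext i j
  have h2' := congrFun (congrFun h2 i) j
  simp only [Matrix.add_apply, Matrix.smul_apply, Matrix.one_apply,
    Matrix.transpose_apply, smul_eq_mul, mcomm, Matrix.sub_apply] at h2' ⊢
  linear_combination (1/2) * h2'

lemma part1 (A : M6) (hA0 : A ≠ 0) (d : ℝ)
    (hd : d = (mdot (mcomm A Aᵀ) (mcomm A Aᵀ)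
        + mdot (circ6 (symPart A) (symPart A)) (mcomm A Aᵀ)) / (2 * mdot A A))
    (h : ∃ (c : ℝ) (D : M7), IsDerivation7 A D ∧
        QA A = c • (1 : M7) + (1/2 : ℝ) • (D + Dᵀ)) :
    ∃ D₁ : M6, mcomm D₁ A = d • A ∧
      mcomm A Aᵀ + circ6 (symPart A) (symPart A) =
        (-((symPart A * symPart A).trace + (1/2) * ((J6 * A).trace)^2 + 2*d)) • (1 : M6)
          + D₁ + D₁ᵀ := by
  obtain ⟨c, D, hder, heq⟩ := h
  set E : M6 := Matrix.of (fun i j => D i.castSucc j.castSucc) with hE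
  have hcomm : E * A - A * E = D 6 6 • A := by
    ext i j
    simp only [Matrix.sub_apply, Matrix.mul_apply, Matrix.smul_apply, smul_eq_mul,
      hE, Matrix.of_apply]
    exact deriv_comm A D hder i j
  have hblock : (1/2 : ℝ) • (A*Aᵀ - Aᵀ*A) + (1/2 : ℝ) • circ6 (symPart A) (symPart A)
      = c • (1 : M6) + (1/2 : ℝ) • (E + Eᵀ) := by
    ext i j
    have h' := congrFun (congrFun heq i.castSucc) j.castSucc
    simp only [QA, bd_ll, Matrix.add_apply, Matrix.smul_apply, Matrix.one_apply,
      Matrix.transpose_apply, smul_eq_mul, Fin.castSucc_inj, mcomm, Matrix.sub_apply] at h'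
    simp only [Matrix.add_apply, Matrix.smul_apply, Matrix.one_apply,
      Matrix.transpose_apply, smul_eq_mul, hE, Matrix.of_apply, Matrix.sub_apply]
    linarith [h']
  have hq : -(1/2) * (symPart A * symPart A).trace - (1/4) * ((J6*A).trace)^2
      = c + D 6 6 := by
    have h' := congrFun (congrFun heq 6) 6
    simp only [QA, bd_rr6, Matrix.add_apply, Matrix.smul_apply, Matrix.one_apply,
      Matrix.transpose_apply, smul_eq_mul, if_true] at h'
    linarith [h']
  have hμd : D 6 6 = d := by
    have hk := trace_key A E (circ6 (symPart A) (symPart A)) (D 6 6) c hcomm hblock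
    have hpos := trace_AAt_pos A hA0
    have hCt : (A*Aᵀ - Aᵀ*A)ᵀ = A*Aᵀ - Aᵀ*A := by
      simp [Matrix.transpose_sub, Matrix.transpose_mul]
    rw [hd]
    unfold mdot mcomm
    rw [hCt]
    field_simp
    linarith [hk]
  refine ⟨E, ?_, ?_⟩
  · show mcomm E A = d • A
    unfold mcomm
    rw [← hμd]
    exact hcomm
  · have hc : c = -(1/2) * (symPart A * symPart A).trace - (1/4) * ((J6*A).trace)^2
        - D 6 6 := by linarith [hq]
    ext i j
    have hb := congrFun (congrFun hblock i) j
    simp only [Matrix.add_apply, Matrix.smul_apply, Matrix.one_apply,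
      Matrix.transpose_apply, smul_eq_mul, Matrix.sub_apply] at hb
    simp only [Matrix.add_apply, Matrix.smul_apply, Matrix.one_apply,
      Matrix.transpose_apply, smul_eq_mul, mcomm, Matrix.sub_apply]
    rw [hc] at hb
    rw [← hμd]
    linear_combination 2 * hb

end Helpers

/-- `(𝔤_A, φ)` is a semi-algebraic soliton of the Laplacian coflow
(i.e. `Q_A = c·I₇ + ½(D + Dᵗ)` for some `c ∈ ℝ` and derivation `D` of `𝔤_A`) iff there is
`D₁ ∈ gl(ℝ⁶)` with `[D₁,A] = d·A` and
`[A,Aᵗ] + S_A ∘₆ S_A = −(tr(S_A²) + ½(tr JA)² + 2d)·I₆ + D₁ + D₁ᵗ`, where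
`d = (|[A,Aᵗ]|² + ⟨S_A ∘₆ S_A,[A,Aᵗ]⟩)/(2|A|²)`; in this case
`c = −½(tr(S_A²) + ½(tr JA)² + 2d)`. -/


theorem semi_algebraic_soliton_iff (A : M6) (hA : inSp A) (hA0 : A ≠ 0)
    (d : ℝ)
    (hd : d = (mdot (mcomm A Aᵀ) (mcomm A Aᵀ)
        + mdot (circ6 (symPart A) (symPart A)) (mcomm A Aᵀ)) / (2 * mdot A A)) :
    ((∃ (c : ℝ) (D : M7), IsDerivation7 A D ∧
        QA A = c • (1 : M7) + (1/2 : ℝ) • (D + Dᵀ)) ↔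
      (∃ D₁ : M6, mcomm D₁ A = d • A ∧
        mcomm A Aᵀ + circ6 (symPart A) (symPart A) =
          (-((symPart A * symPart A).trace + (1/2) * ((J6 * A).trace)^2 + 2*d)) • (1 : M6)
            + D₁ + D₁ᵀ)) ∧
    ((∃ D₁ : M6, mcomm D₁ A = d • A ∧
        mcomm A Aᵀ + circ6 (symPart A) (symPart A) =
          (-((symPart A * symPart A).trace + (1/2) * ((J6 * A).trace)^2 + 2*d)) • (1 : M6)
            + D₁ + D₁ᵀ) →
      ∃ D : M7, IsDerivation7 A D ∧
        QA A = (-(1/2) * ((symPart A * symPart A).trace + (1/2) * ((J6 * A).trace)^2 + 2*d))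
            • (1 : M7) + (1/2 : ℝ) • (D + Dᵀ)) := by
  constructor
  · constructor
    · exact part1 A hA0 d hd
    · intro h
      obtain ⟨D, hder, heq⟩ := part2 A d h
      exact ⟨_, D, hder, heq⟩
  · exact part2 A d
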